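/- For any u in the unit simplex Δ ⊂ ℝⁿ, ‖u‖₂² − 1/n ≤ KL(u, e/n), where e/n is the uniform distribution and KL(u, v) = ∑_i u_i ln(u_i / v_i); in particular ‖u‖₂² ≤ 1/n + KL(u, e/n). -/

import Mathlib

open Real


/-- `log t ≥ 2(t-1)/(t+1)` for `t ≥ 1`. -/
lemma log_ge_pade {t : ℝ} (ht : 1 ≤ t) : 2*(t-1)/(t+1) ≤ Real.log t := by
  have key : MonotoneOn (fun x : ℝ => Real.log x - 2*(x-1)/(x+1)) (Set.Ici 1) := by
    apply monotoneOn_of_hasDerivWithinAt_nonneg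
      (f' := fun x => 1/x - (2*1*(x+1) - 2*(x-1)*1)/(x+1)^2) (convex_Ici 1)
    · apply ContinuousOn.sub
      · exact Real.continuousOn_log.mono (by intro x hx; simp at hx ⊢; intro h; simp [h] at hx; linarith)
      · apply ContinuousOn.div
        · fun_prop
        · fun_prop
        · intro x hx; simp at hx; intro h; linarith
    · intro x hx
      rw [interior_Ici] at hx
      simp only [Set.mem_Ioi] at hx
      have hx0 : x ≠ 0 := by linarith
      have hx1 : x + 1 ≠ 0 := by linarith
      apply HasDerivAt.hasDerivWithinAt
      have h1 : HasDerivAt Real.log (1/x) x := by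
        simpa [one_div] using Real.hasDerivAt_log hx0
      have h2 : HasDerivAt (fun x : ℝ => 2*(x-1)/(x+1))
          ((2*1*(x+1) - 2*(x-1)*1)/(x+1)^2) x :=
        (((hasDerivAt_id x).sub_const 1).const_mul 2).div
          ((hasDerivAt_id x).add_const 1) hx1
      exact h1.sub h2
    · intro x hx
      rw [interior_Ici] at hx
      simp only [Set.mem_Ioi] at hx
      have hx0 : 0 < x := by linarith
      have hx1 : (0:ℝ) < (x+1)^2 := by positivity
      rw [sub_nonneg, div_le_div_iff₀ hx1 hx0]
      nlinarith [sq_nonneg (x-1)]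
  have h0 : (1:ℝ) ∈ Set.Ici (1:ℝ) := by simp
  have ht' : t ∈ Set.Ici (1:ℝ) := ht
  have := key h0 ht' ht
  simp at this
  linarith


/-- `t log t - t + 1 ≥ (t-1)²/2` for `0 ≤ t ≤ 1`. -/
lemma mul_log_quad {t : ℝ} (h0 : 0 ≤ t) (h1 : t ≤ 1) :
    (t-1)^2/2 ≤ t * Real.log t - t + 1 := by
  rcases eq_or_lt_of_le h0 with h | h
  · rw [← h]; norm_num
  have key : AntitoneOn (fun x : ℝ => x * Real.log x - x + 1 - (x-1)^2/2) (Set.Ioi 0) := by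
    apply antitoneOn_of_hasDerivWithinAt_nonpos
      (f' := fun x => (1 * Real.log x + x * x⁻¹ - 1) - (2*(x-1)*1)/2) (convex_Ioi 0)
    · apply ContinuousOn.sub
      · apply ContinuousOn.add
        · apply ContinuousOn.sub
          · exact (continuousOn_id.mul (Real.continuousOn_log.mono (by
              intro x hx; simp at hx ⊢; linarith)))
          · fun_prop
        · fun_prop
      · fun_prop
    · intro x hx
      rw [interior_Ioi] at hx
      simp only [Set.mem_Ioi] at hx
      apply HasDerivAt.hasDerivWithinAt
      have h1 : HasDerivAt (fun x : ℝ => x * Real.log x) (1 * Real.log x + x * x⁻¹) x :=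
        (hasDerivAt_id x).mul (Real.hasDerivAt_log hx.ne')
      have h2 : HasDerivAt (fun x : ℝ => (x-1)^2/2) ((2*(x-1)*1)/2) x := by
        have : HasDerivAt (fun x : ℝ => (x-1)^2) (2*(x-1)*1) x := by
          simpa [Pi.pow_def] using (((hasDerivAt_id x).sub_const 1).pow 2)
        exact this.div_const 2
      exact ((h1.sub (hasDerivAt_id x)).add_const 1).sub h2
    · intro x hx
      rw [interior_Ioi] at hx
      simp only [Set.mem_Ioi] at hx
      have hlog := Real.log_le_sub_one_of_pos hx
      have : x * x⁻¹ = 1 := mul_inv_cancel₀ hx.ne'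
      rw [this]
      linarith
  have h0' : t ∈ Set.Ioi (0:ℝ) := h
  have h1' : (1:ℝ) ∈ Set.Ioi (0:ℝ) := by norm_num
  have := key h0' h1' h1
  simp at this
  linarith





/-- binary case: `(1+e)log(1+e) + (1-e)log(1-e) ≥ e²` for `0 ≤ e ≤ 1`. -/
lemma binary_entropy_bound {e : ℝ} (h0 : 0 ≤ e) (h1 : e ≤ 1) :
    e^2 ≤ (1+e) * Real.log (1+e) + (1-e) * Real.log (1-e) := by
  rcases eq_or_lt_of_le h1 with h | h
  · subst h
    have := log_ge_pade (t := 2) (by norm_num)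
    norm_num at this ⊢
    linarith
  have key : MonotoneOn
      (fun x : ℝ => (1+x) * Real.log (1+x) + (1-x) * Real.log (1-x) - x^2) (Set.Icc 0 e) := by
    apply monotoneOn_of_hasDerivWithinAt_nonneg
      (f' := fun x => (1 * Real.log (1+x) + (1+x)*(1+x)⁻¹) * 1 +
        (1 * Real.log (1-x) + (1-x)*(1-x)⁻¹) * (0-1) - 2*x^1) (convex_Icc 0 e)
    · apply ContinuousOn.sub
      · apply ContinuousOn.add
        · apply ContinuousOn.mul
          · fun_prop
          · apply Real.continuousOn_log.comp (by fun_prop)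
            intro x hx
            simp at hx ⊢
            linarith [hx.1]
        · apply ContinuousOn.mul
          · fun_prop
          · apply Real.continuousOn_log.comp (by fun_prop)
            intro x hx
            simp at hx ⊢
            linarith [hx.2, h]
      · fun_prop
    · intro x hx
      rw [interior_Icc] at hx
      obtain ⟨hxl, hxr⟩ := hx
      have hp1 : (0:ℝ) < 1 + x := by linarith
      have hp2 : (0:ℝ) < 1 - x := by linarith
      apply HasDerivAt.hasDerivWithinAt
      have hinner1 : HasDerivAt (fun x : ℝ => 1 + x) 1 x := by
        simpa using (hasDerivAt_id x).const_add 1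
      have houter1 : HasDerivAt (fun y : ℝ => y * Real.log y)
          (1 * Real.log (1+x) + (1+x)*(1+x)⁻¹) (1+x) :=
        (hasDerivAt_id _).mul (Real.hasDerivAt_log hp1.ne')
      have h₁ : HasDerivAt (fun x : ℝ => (1+x) * Real.log (1+x))
          ((1 * Real.log (1+x) + (1+x)*(1+x)⁻¹) * 1) x := houter1.comp x hinner1
      have hinner2 : HasDerivAt (fun x : ℝ => 1 - x) (0-1) x :=
        (hasDerivAt_const x 1).sub (hasDerivAt_id x)
      have houter2 : HasDerivAt (fun y : ℝ => y * Real.log y)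
          (1 * Real.log (1-x) + (1-x)*(1-x)⁻¹) (1-x) :=
        (hasDerivAt_id _).mul (Real.hasDerivAt_log hp2.ne')
      have h₂ : HasDerivAt (fun x : ℝ => (1-x) * Real.log (1-x))
          ((1 * Real.log (1-x) + (1-x)*(1-x)⁻¹) * (0-1)) x := houter2.comp x hinner2
      exact (h₁.add h₂).sub (hasDerivAt_pow 2 x)
    · intro x hx
      rw [interior_Icc] at hx
      obtain ⟨hxl, hxr⟩ := hx
      have hp1 : (0:ℝ) < 1 + x := by linarith
      have hp2 : (0:ℝ) < 1 - x := by linarith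
      have ht : 1 ≤ (1+x)/(1-x) := by
        rw [le_div_iff₀ hp2]; linarith
      have hp := log_ge_pade ht
      rw [Real.log_div hp1.ne' hp2.ne'] at hp
      have heq : 2*((1+x)/(1-x)-1)/((1+x)/(1-x)+1) = 2*x := by
        field_simp
        ring
      rw [heq] at hp
      have e1 : (1+x)*(1+x)⁻¹ = 1 := mul_inv_cancel₀ hp1.ne'
      have e2 : (1-x)*(1-x)⁻¹ = 1 := mul_inv_cancel₀ hp2.ne'
      rw [e1, e2]
      ring_nf
      ring_nf at hp
      linarith
  have h0' : (0:ℝ) ∈ Set.Icc (0:ℝ) e := by simp [h0]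
  have he' : e ∈ Set.Icc (0:ℝ) e := by simp [h0]
  have := key h0' he' h0
  norm_num at this
  linarith




lemma pt_low {y u : ℝ} (hy : 0 < y) (hu : 0 ≤ u) (h : u ≤ y) :
    (u - y)^2/(2*y) ≤ u * Real.log (u/y) - u + y := by
  set t := u / y with hty
  have ht0 : 0 ≤ t := div_nonneg hu hy.le
  have ht1 : t ≤ 1 := (div_le_one hy).2 h
  have hq := mul_log_quad ht0 ht1
  have hu' : u = t * y := (div_mul_cancel₀ u hy.ne').symm
  have hmul := mul_le_mul_of_nonneg_left hq hy.le
  have e1 : (t*y - y)^2/(2*y) = y*((t-1)^2/2) := by field_simp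
  have e2 : y*(t * Real.log t - t + 1) = t*y*Real.log t - t*y + y := by ring
  rw [hu', e1]
  linarith
lemma pt_high {y u : ℝ} (hy : 0 < y) (h : y ≤ u) :
    (u - y)^2/(u+y) ≤ u * Real.log (u/y) - u + y := by
  have hu0 : 0 < u := lt_of_lt_of_le hy h
  have hd : 0 < u + y := by linarith
  have ht : 1 ≤ u/y := (one_le_div hy).2 h
  have hp := log_ge_pade ht
  have heq : 2*(u/y-1)/(u/y+1) = 2*(u-y)/(u+y) := by
    rw [div_sub_one hy.ne', div_add_one hy.ne']
    rw [div_eq_div_iff (by positivity) hd.ne']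
    field_simp
  rw [heq] at hp
  have hmul := mul_le_mul_of_nonneg_left hp hu0.le
  have e1 : u * (2*(u-y)/(u+y)) - u + y = (u-y)^2/(u+y) := by field_simp; ring
  linarith

lemma key3 (n : ℕ) (hn : 3 ≤ n) (u : Fin n → ℝ) (hu0 : ∀ i, 0 ≤ u i)
    (hu1 : ∑ i, u i = 1) :
    ∑ i, (u i - 1/(n:ℝ))^2 ≤ ∑ i, (u i * Real.log (u i / (1/(n:ℝ))) - u i + 1/(n:ℝ)) := by
  set N : ℝ := (n:ℝ) with hN
  have hN3 : (3:ℝ) ≤ N := by rw [hN]; exact_mod_cast hn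
  have hNpos : (0:ℝ) < N := by linarith
  have hy : (0:ℝ) < 1/N := by positivity
  have hNinv : (1:ℝ)/N ≤ 1/3 := by
    apply div_le_div_of_nonneg_left (by norm_num) (by norm_num) hN3
  have hu_le_one : ∀ i, u i ≤ 1 := by
    intro i
    calc u i ≤ ∑ j, u j := Finset.single_le_sum (fun j _ => hu0 j) (Finset.mem_univ i)
    _ = 1 := hu1
  by_cases hall : ∀ i, u i + 1/N ≤ 1
  · apply Finset.sum_le_sum
    intro i _
    rcases le_total (u i) (1/N) with hc | hc
    · have h := pt_low hy (hu0 i) hc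
      have h2 : (u i - 1/N)^2 ≤ (u i - 1/N)^2/(2*(1/N)) := by
        rw [le_div_iff₀ (by positivity)]
        nlinarith [sq_nonneg (u i - 1/N)]
      linarith
    · have h := pt_high hy hc
      have hd : 0 < u i + 1/N := by linarith
      have h2 : (u i - 1/N)^2 ≤ (u i - 1/N)^2/(u i + 1/N) := by
        rw [le_div_iff₀ hd]
        nlinarith [sq_nonneg (u i - 1/N), hall i]
      linarith
  · push_neg at hall
    obtain ⟨i₀, hbig⟩ := hall
    have hi₀y : 1/N ≤ u i₀ := by linarith
    have hjlt : ∀ j, j ≠ i₀ → u j ≤ 1/N := by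
      intro j hj
      have hsub : u i₀ + u j ≤ 1 := by
        have h2 : ∑ k ∈ ({i₀, j} : Finset (Fin n)), u k ≤ ∑ k, u k :=
          Finset.sum_le_sum_of_subset_of_nonneg (Finset.subset_univ _) (fun k _ _ => hu0 k)
        rw [Finset.sum_pair (Ne.symm hj), hu1] at h2
        exact h2
      linarith
    rw [← Finset.add_sum_erase _ (fun i => (u i - 1/N)^2) (Finset.mem_univ i₀),
        ← Finset.add_sum_erase _ (fun i => u i * Real.log (u i / (1/N)) - u i + 1/N)
          (Finset.mem_univ i₀)]
    set a₀ := u i₀ * Real.log (u i₀ / (1/N)) - u i₀ + 1/N with ha₀def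
    set b₀ := (u i₀ - 1/N)^2 with hb₀def
    set S' := ∑ j ∈ Finset.univ.erase i₀, (u j - 1/N)^2 with hS'
    have hb₀ : 0 ≤ b₀ := sq_nonneg _
    have hS'0 : 0 ≤ S' := Finset.sum_nonneg fun j _ => sq_nonneg _
    have hd : 0 < u i₀ + 1/N := by linarith
    have ha₀ : b₀/(u i₀ + 1/N) ≤ a₀ := pt_high hy hi₀y
    have ha₀nn : 0 ≤ a₀ := le_trans (by positivity) ha₀
    have ha₀' : b₀ * N ≤ a₀ * (N + 1) := by
      have h1 : b₀ ≤ a₀ * (u i₀ + 1/N) := (div_le_iff₀ hd).1 ha₀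
      have h2 : a₀ * (u i₀ + 1/N) ≤ a₀ * (1 + 1/N) :=
        mul_le_mul_of_nonneg_left (by linarith [hu_le_one i₀]) ha₀nn
      have h3 : (1 + 1/N) * N = N + 1 := by field_simp
      have h4 := mul_le_mul_of_nonneg_right (h1.trans h2) hNpos.le
      calc b₀ * N ≤ a₀ * (1 + 1/N) * N := h4
        _ = a₀ * (N + 1) := by rw [mul_assoc, h3]
    have hsumj : (N/2) * S' ≤
        ∑ j ∈ Finset.univ.erase i₀, (u j * Real.log (u j / (1/N)) - u j + 1/N) := by
      rw [hS', Finset.mul_sum]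
      apply Finset.sum_le_sum
      intro j hj
      have hjne := Finset.ne_of_mem_erase hj
      have h := pt_low hy (hu0 j) (hjlt j hjne)
      have e : (u j - 1/N)^2/(2*(1/N)) = N/2 * (u j - 1/N)^2 := by field_simp
      linarith [e ▸ h]
    have hCS : b₀ ≤ (N - 1) * S' := by
      have hcard : ((Finset.univ.erase i₀).card : ℝ) = N - 1 := by
        rw [Finset.card_erase_of_mem (Finset.mem_univ i₀), Finset.card_univ, Fintype.card_fin]
        have : (1:ℕ) ≤ n := by omega
        push_cast [Nat.cast_sub this]
        ring
      have h1 := sq_sum_le_card_mul_sum_sq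
        (s := Finset.univ.erase i₀) (f := fun j => 1/N - u j)
      have hsum : ∑ j ∈ Finset.univ.erase i₀, (1/N - u j) = u i₀ - 1/N := by
        rw [Finset.sum_sub_distrib, Finset.sum_const, nsmul_eq_mul, hcard]
        have hsplit : u i₀ + ∑ j ∈ Finset.univ.erase i₀, u j = 1 := by
          rw [Finset.add_sum_erase _ u (Finset.mem_univ i₀)]; exact hu1
        have : ∑ j ∈ Finset.univ.erase i₀, u j = 1 - u i₀ := by linarith
        rw [this]
        field_simp
        ring
      have hsq : ∑ j ∈ Finset.univ.erase i₀, (1/N - u j)^2 = S' := by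
        apply Finset.sum_congr rfl
        intro j _
        ring
      rw [hsum, hsq, hcard] at h1
      exact h1
    have haux2 : 0 ≤ S' * (N - 3) * N :=
      mul_nonneg (mul_nonneg hS'0 (by linarith)) hNpos.le
    have hNp1 : (0:ℝ) < N + 1 := by linarith
    clear_value a₀ b₀ S'
    have key : (b₀ + S') * (N+1) ≤ (a₀ + (N/2) * S') * (N+1) := by
      nlinarith [ha₀', hCS, haux2]
    have key2 : b₀ + S' ≤ a₀ + (N/2) * S' := (mul_le_mul_iff_of_pos_right hNp1).1 key
    linarith




lemma binary2 {p q : ℝ} (hp : 0 ≤ p) (hq : 0 ≤ q) (hpq : p + q = 1) (h : q ≤ p) :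
    p^2 + q^2 - 1/2 ≤ p * Real.log (p/(1/2)) + q * Real.log (q/(1/2)) := by
  have he0 : 0 ≤ p - q := by linarith
  have he1 : p - q ≤ 1 := by linarith
  have hb := binary_entropy_bound he0 he1
  have e1 : 1 + (p - q) = 2*p := by linarith
  have e2 : 1 - (p - q) = 2*q := by linarith
  rw [e1, e2] at hb
  have d1 : p/(1/2) = 2*p := by ring
  have d2 : q/(1/2) = 2*q := by ring
  rw [d1, d2]
  have hid : p^2 + q^2 - 1/2 = (p-q)^2/2 := by linear_combination ((p+q+1)/2) * hpq
  linarith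

/-- for `u` in the unit simplex, `‖u‖₂² − 1/n ≤ KL(u, uniform)`, where
`KL(u, e/n) = ∑ i, u i * log (u i / (1/n))` (with the convention `0 * log 0 = 0`, which holds
automatically since `Real.log 0 = 0`); in particular `‖u‖₂² ≤ 1/n + KL(u, e/n)`. -/
theorem stmt_8 (n : ℕ) (hn : 0 < n) (u : Fin n → ℝ)
    (hu0 : ∀ i, 0 ≤ u i) (hu1 : ∑ i, u i = 1) :
    (∑ i, (u i) ^ 2) - 1 / n ≤ ∑ i, u i * Real.log (u i / (1 / n)) ∧
    (∑ i, (u i) ^ 2) ≤ 1 / n + ∑ i, u i * Real.log (u i / (1 / n)) := by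
  have main : (∑ i, (u i) ^ 2) - 1 / (n:ℝ) ≤ ∑ i, u i * Real.log (u i / (1 / (n:ℝ))) := by
    rcases lt_or_ge n 3 with h3 | h3
    · interval_cases n
      · simp only [Fin.sum_univ_one] at hu1 ⊢
        simp [hu1]
      · simp only [Fin.sum_univ_two] at hu1 ⊢
        have hc : ((2:ℕ):ℝ) = 2 := by norm_num
        rw [hc]
        rcases le_total (u 1) (u 0) with h | h
        · linarith [binary2 (hu0 0) (hu0 1) hu1 h]
        · linarith [binary2 (hu0 1) (hu0 0) (by linarith) h]
    · have hk := key3 n h3 u hu0 hu1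
      have hN0 : (n:ℝ) ≠ 0 := by positivity
      have hA : ∑ i, (u i - 1/(n:ℝ))^2 = (∑ i, (u i)^2) - 1/(n:ℝ) := by
        rw [Finset.sum_congr rfl (fun i _ =>
          (by ring : (u i - 1/(n:ℝ))^2 = (u i)^2 - (2/(n:ℝ)) * u i + (1/(n:ℝ))^2))]
        rw [Finset.sum_add_distrib, Finset.sum_sub_distrib, ← Finset.mul_sum, hu1,
          Finset.sum_const, Finset.card_univ, Fintype.card_fin, nsmul_eq_mul]
        field_simp
        ring
      have hB : ∑ i, (u i * Real.log (u i / (1/(n:ℝ))) - u i + 1/(n:ℝ))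
          = ∑ i, u i * Real.log (u i / (1/(n:ℝ))) := by
        rw [Finset.sum_add_distrib, Finset.sum_sub_distrib, hu1,
          Finset.sum_const, Finset.card_univ, Fintype.card_fin, nsmul_eq_mul]
        field_simp
        rw [sub_add_cancel]; simp_rw [mul_comm (n:ℝ)]
      rw [hA, hB] at hk
      exact hk
  exact ⟨main, by linarith [main]⟩
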